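/- If M ∈ ℂ^{n×n} is not Frobenius-singular, then there exists a choice of pairwise distinct complex numbers t₁,…,t_{2n} such that the matrix S with entries S_{ij} = m_{ij}/(t_i − t_{n+j}) is invertible. -/

import Mathlib

open Filter Topology

lemma aux_gap17 {a b : ℕ} (h : a ≠ b) : 1 ≤ ‖(a : ℂ) - b‖ := by
  have h1 : ((a : ℂ) - b) = (((a : ℤ) - (b : ℤ) : ℤ) : ℂ) := by push_cast; ring
  rw [h1, Complex.norm_intCast, ← Int.cast_abs]
  have h2 : (a : ℤ) - (b : ℤ) ≠ 0 := by omega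
  exact_mod_cast Int.one_le_abs h2

lemma aux_perm17 {n : ℕ} (M : Matrix (Fin n) (Fin n) ℂ)
    (hFrob : ¬ ∃ rows cols : Finset (Fin n),
        rows.card + cols.card = n + 1 ∧
        ∀ i ∈ rows, ∀ j ∈ cols, M i j = 0) :
    ∃ σ : Equiv.Perm (Fin n), ∀ i, M i (σ i) ≠ 0 := by
  classical
  set N : Fin n → Finset (Fin n) := fun i => Finset.univ.filter fun j => M i j ≠ 0 with hN
  have hHall : ∀ s : Finset (Fin n), s.card ≤ (s.biUnion N).card := by
    intro s
    by_contra hlt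
    push_neg at hlt
    have hb : (s.biUnion N).card ≤ n := by
      have := Finset.card_le_univ (s.biUnion N)
      simpa using this
    obtain ⟨s', hs'sub, hs'card⟩ :=
      Finset.exists_subset_card_eq (s := s) (n := (s.biUnion N).card + 1) (by omega)
    refine hFrob ⟨s', (s.biUnion N)ᶜ, ?_, ?_⟩
    · rw [Finset.card_compl, hs'card, Fintype.card_fin]
      omega
    · intro i hi j hj
      by_contra hij
      exact (Finset.mem_compl.mp hj)
        (Finset.mem_biUnion.mpr ⟨i, hs'sub hi,
          Finset.mem_filter.mpr ⟨Finset.mem_univ _, hij⟩⟩)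
  obtain ⟨f, hfinj, hf⟩ := (Finset.all_card_le_biUnion_card_iff_exists_injective N).mp hHall
  refine ⟨Equiv.ofBijective f (Finite.injective_iff_bijective.mp hfinj), fun i => ?_⟩
  have := hf i
  simp only [hN, Finset.mem_filter] at this
  simpa [Equiv.ofBijective] using this.2

/-- If `M` is not Frobenius-singular, then there exist pairwise distinct
`t₁,…,t_{2n}` such that the matrix `S` with entries `M i j / (t_i - t_{n+j})`
is invertible. -/
theorem stmt17 {n : ℕ} (M : Matrix (Fin n) (Fin n) ℂ)
    (hFrob : ¬ ∃ rows cols : Finset (Fin n),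
        rows.card + cols.card = n + 1 ∧
        ∀ i ∈ rows, ∀ j ∈ cols, M i j = 0) :
    ∃ t : Fin (n + n) → ℂ, Function.Injective t ∧
      (Matrix.of fun i j : Fin n =>
          M i j / (t (Fin.castAdd n i) - t (Fin.natAdd n j))).det ≠ 0 := by
  classical
  obtain ⟨σ, hσ⟩ := aux_perm17 M hFrob
  set c : Fin n → ℂ := fun i => ((i : ℕ) : ℂ) with hc
  have hcinj : Function.Injective c := by
    intro a b hab
    have : ((a : ℕ) : ℂ) = ((b : ℕ) : ℂ) := hab
    exact Fin.ext (by exact_mod_cast this)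
  -- the t-function depending on ε
  set T : ℂ → Fin (n + n) → ℂ :=
    fun ε => Fin.addCases (fun i => c i) (fun j => c (σ⁻¹ j) - ε) with hT
  -- the determinant as a function of ε
  set S : ℂ → Matrix (Fin n) (Fin n) ℂ :=
    fun ε => Matrix.of fun i j : Fin n => M i j / (c i - (c (σ⁻¹ j) - ε)) with hS
  -- F ε = det (S ε) * ε ^ n
  set F : ℂ → ℂ := fun ε => ∑ τ : Equiv.Perm (Fin n),
      ((Equiv.Perm.sign τ : ℤ) : ℂ) *
        ∏ i : Fin n, (M (τ i) i * (ε / (c (τ i) - (c (σ⁻¹ i) - ε)))) with hF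
  have hFdet : ∀ ε : ℂ, F ε = (S ε).det * ε ^ n := by
    intro ε
    rw [Matrix.det_apply', Finset.sum_mul, hF]
    refine Finset.sum_congr rfl fun τ _ => ?_
    have hεn : (ε : ℂ) ^ n = ∏ _i : Fin n, ε := by
      simp [Finset.prod_const, Fintype.card_fin]
    rw [hεn]
    have : (∏ i : Fin n, (S ε) (τ i) i) * ∏ _i : Fin n, ε
        = ∏ i : Fin n, ((S ε) (τ i) i * ε) := by
      rw [← Finset.prod_mul_distrib]
    rw [mul_assoc, this]
    congr 1
    refine Finset.prod_congr rfl fun i _ => ?_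
    simp only [hS, Matrix.of_apply]
    ring
  -- limit of F as ε → 0 (punctured)
  set L : ℂ := ((Equiv.Perm.sign σ⁻¹ : ℤ) : ℂ) * ∏ i : Fin n, M (σ⁻¹ i) i with hL
  have hLne : L ≠ 0 := by
    apply mul_ne_zero
    · simp [Int.cast_eq_zero]
    · apply Finset.prod_ne_zero_iff.mpr
      intro i _
      have := hσ (σ⁻¹ i)
      simpa using this
  have hfac : ∀ (τ : Equiv.Perm (Fin n)) (i : Fin n),
      Tendsto (fun ε : ℂ => M (τ i) i * (ε / (c (τ i) - (c (σ⁻¹ i) - ε))))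
        (𝓝[≠] 0) (𝓝 (M (τ i) i * (if τ i = σ⁻¹ i then 1 else 0))) := by
    intro τ i
    by_cases h : τ i = σ⁻¹ i
    · simp only [h, if_pos rfl]
      apply Tendsto.congr' (f₁ := fun _ : ℂ => M (σ⁻¹ i) i * 1)
      · filter_upwards [self_mem_nhdsWithin] with ε hε
        have hε0 : ε ≠ 0 := hε
        rw [show c (σ⁻¹ i) - (c (σ⁻¹ i) - ε) = ε by ring, div_self hε0]
      · exact tendsto_const_nhds
    · rw [if_neg h]
      have hd : c (τ i) - c (σ⁻¹ i) ≠ 0 := by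
        intro hcontra
        exact h (hcinj (by linear_combination hcontra))
      have h1 : Tendsto (fun ε : ℂ => ε / (c (τ i) - (c (σ⁻¹ i) - ε)))
          (𝓝 0) (𝓝 (0 / (c (τ i) - (c (σ⁻¹ i) - 0)))) := by
        apply Tendsto.div tendsto_id
        · exact (continuous_const.sub (continuous_const.sub continuous_id)).tendsto 0
        · simpa using hd
      have h2 : Tendsto (fun ε : ℂ => ε / (c (τ i) - (c (σ⁻¹ i) - ε)))
          (𝓝[≠] 0) (𝓝 (0 / (c (τ i) - (c (σ⁻¹ i) - 0)))) := h1.mono_left nhdsWithin_le_nhds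
      have h3 := h2.const_mul (M (τ i) i)
      simpa using h3
  have hterm : ∀ τ : Equiv.Perm (Fin n),
      Tendsto (fun ε : ℂ => ((Equiv.Perm.sign τ : ℤ) : ℂ) *
          ∏ i : Fin n, (M (τ i) i * (ε / (c (τ i) - (c (σ⁻¹ i) - ε)))))
        (𝓝[≠] 0)
        (𝓝 (((Equiv.Perm.sign τ : ℤ) : ℂ) *
          ∏ i : Fin n, (M (τ i) i * (if τ i = σ⁻¹ i then 1 else 0)))) := by
    intro τ
    exact (tendsto_finset_prod _ fun i _ => hfac τ i).const_mul _
  have hFtendsto : Tendsto F (𝓝[≠] 0) (𝓝 L) := by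
    have hsum := tendsto_finset_sum Finset.univ fun τ _ => hterm τ
    have hval : (∑ τ : Equiv.Perm (Fin n), ((Equiv.Perm.sign τ : ℤ) : ℂ) *
        ∏ i : Fin n, (M (τ i) i * (if τ i = σ⁻¹ i then 1 else 0))) = L := by
      rw [Finset.sum_eq_single σ⁻¹]
      · rw [hL]
        congr 1
        refine Finset.prod_congr rfl fun i _ => ?_
        simp
      · intro τ _ hτ
        have : ∃ i : Fin n, τ i ≠ σ⁻¹ i := by
          by_contra hcon
          push_neg at hcon
          exact hτ (Equiv.ext hcon)
        obtain ⟨i, hi⟩ := this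
        rw [Finset.prod_eq_zero (Finset.mem_univ i) (by rw [if_neg hi, mul_zero]), mul_zero]
      · intro h
        exact absurd (Finset.mem_univ _) h
    rw [← hval]
    exact hsum
  have hev : ∀ᶠ ε in 𝓝[≠] (0 : ℂ), F ε ≠ 0 ∧ ‖ε‖ < 1 ∧ ε ≠ 0 := by
    have h1 : ∀ᶠ ε in 𝓝[≠] (0 : ℂ), F ε ≠ 0 := hFtendsto.eventually_ne hLne
    have h2 : ∀ᶠ ε in 𝓝 (0 : ℂ), ‖ε‖ < 1 := by
      have := Metric.ball_mem_nhds (0 : ℂ) one_pos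
      filter_upwards [this] with x hx
      simpa [Metric.mem_ball, dist_zero_right] using hx
    filter_upwards [h1, h2.filter_mono nhdsWithin_le_nhds, self_mem_nhdsWithin]
      with ε hε1 hε2 hε3
    exact ⟨hε1, hε2, hε3⟩
  obtain ⟨ε, hF0, hεnorm, hε0⟩ := hev.exists
  refine ⟨T ε, ?_, ?_⟩
  · -- injectivity
    intro a b hab
    induction a using Fin.addCases with
    | left i =>
      induction b using Fin.addCases with
      | left i' =>
        simp only [hT, Fin.addCases_left] at hab
        exact congrArg _ (hcinj hab)
      | right j =>
        exfalso
        simp only [hT, Fin.addCases_left, Fin.addCases_right] at hab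
        by_cases hij : σ⁻¹ j = i
        · rw [hij] at hab
          exact hε0 (by linear_combination hab)
        · have hgap : 1 ≤ ‖c (σ⁻¹ j) - c i‖ := by
            apply aux_gap17
            intro hval
            exact hij (Fin.ext hval)
          have : c (σ⁻¹ j) - c i = ε := by linear_combination -hab
          rw [this] at hgap
          linarith
    | right j =>
      induction b using Fin.addCases with
      | left i' =>
        exfalso
        simp only [hT, Fin.addCases_left, Fin.addCases_right] at hab
        by_cases hij : σ⁻¹ j = i'
        · rw [hij] at hab
          exact hε0 (by linear_combination -hab)
        · have hgap : 1 ≤ ‖c (σ⁻¹ j) - c i'‖ := by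
            apply aux_gap17
            intro hval
            exact hij (Fin.ext hval)
          have : c (σ⁻¹ j) - c i' = ε := by linear_combination hab
          rw [this] at hgap
          linarith
      | right j' =>
        simp only [hT, Fin.addCases_right] at hab
        have : c (σ⁻¹ j) = c (σ⁻¹ j') := by linear_combination hab
        exact congrArg _ (σ⁻¹.injective (hcinj this))
  · -- determinant nonzero
    have hSeq : (Matrix.of fun i j : Fin n =>
        M i j / (T ε (Fin.castAdd n i) - T ε (Fin.natAdd n j))) = S ε := by
      ext i j
      simp only [hT, hS, Matrix.of_apply, Fin.addCases_left, Fin.addCases_right]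
    rw [hSeq]
    intro hdet
    rw [hFdet ε, hdet, zero_mul] at hF0
    exact hF0 rfl
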